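/- arXiv:2207.04381 — 3 statements merged into one kernel-verified Lean document; each statement's English description precedes it below -/
import Mathlib

section
/- Let h > 0 and L = h·(n + 1/2) with n ∈ ℤ_{>0}, let Z be an integrable real random variable supported in [−L, L], and let Z̃ be its (h, L)-discretization. Then for every k ∈ ℤ_{>0}, every η ∈ (0, 1), and every s ∈ ℝ, Pr[|Z̃^{⊕k}| > s] ≤ η + Pr[|Z^{⊕k}| > s − h·√((k/2)·log(2/η))]. -/
open MeasureTheory ProbabilityTheory Real

noncomputable section

/-- The convolution of two Borel measures on `ℝ`:
the distribution of the sum of independent samples. -/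
def mconv (μ ν : MeasureTheory.Measure ℝ) : MeasureTheory.Measure ℝ :=
  (μ.prod ν).map fun p => p.1 + p.2

/-- `convPow μ k` is the `k`-fold convolution power of `μ`,
i.e. the distribution of the sum of `k` independent samples from `μ`. -/
def convPow (μ : MeasureTheory.Measure ℝ) : ℕ → MeasureTheory.Measure ℝ
  | 0 => MeasureTheory.Measure.dirac 0
  | n + 1 => mconv (convPow μ n) μ

/-- `δ_Y(ε) = E[max(0, 1 - e^{ε - Y})]` for a random variable `Y` with distribution `μ`. -/
def deltaCurve (μ : MeasureTheory.Measure ℝ) (ε : ℝ) : ℝ :=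
  ∫ y, max 0 (1 - Real.exp (ε - y)) ∂μ

/-- `ε_Y(δ) = inf {ε : δ_Y(ε) ≤ δ}`. -/
def epsCurve (μ : MeasureTheory.Measure ℝ) (δ : ℝ) : ℝ :=
  sInf {ε : ℝ | deltaCurve μ ε ≤ δ}

/-- A privacy loss random variable (PRV): a real random variable `Y` with `E[e^{-Y}] = 1`. -/
def IsPRV (μ : MeasureTheory.Measure ℝ) : Prop :=
  MeasureTheory.IsProbabilityMeasure μ ∧ (∫ y, Real.exp (-y) ∂μ) = 1

/-- `|X - Y| ≤_η h` : there is a coupling of the distributions `μ` of `X` and `ν` of `Y`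
under which `Pr[|X - Y| > h] ≤ η`. -/
def CouplingApprox (μ ν : MeasureTheory.Measure ℝ) (η h : ℝ) : Prop :=
  ∃ γ : MeasureTheory.Measure (ℝ × ℝ), MeasureTheory.IsProbabilityMeasure γ ∧
    γ.map Prod.fst = μ ∧ γ.map Prod.snd = ν ∧
    (γ {p : ℝ × ℝ | h < |p.1 - p.2|}).toReal ≤ η

/-- Total variation distance: `sup_B |μ(B) - ν(B)|` over Borel sets `B`. -/
def tvDist (μ ν : MeasureTheory.Measure ℝ) : ℝ :=
  ⨆ B : {B : Set ℝ // MeasurableSet B}, |(μ B.1).toReal - (ν B.1).toReal|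

/-- `L ∈ h · (1/2 + ℤ_{>0})`, i.e. `L = h(n + 1/2)` for a positive integer `n`. -/
def IsHalfGrid (h L : ℝ) : Prop := ∃ n : ℕ, 0 < n ∧ L = h * ((n : ℝ) + 1 / 2)

/-- The rounding map `R(t) = h · max(-n, ⌈t/h - 1/2⌉)` where `L = h(n + 1/2)`. -/
def discRound (h L t : ℝ) : ℝ :=
  h * ((max (-⌊L / h - 1 / 2⌋) ⌈t / h - 1 / 2⌉ : ℤ) : ℝ)

/-- The mean-correction shift `μ = E[Z - R(Z)]` used in the discretization. -/
def discMean (h L : ℝ) (μ : MeasureTheory.Measure ℝ) : ℝ :=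
  (∫ t, t ∂μ) - ∫ t, discRound h L t ∂μ

/-- The `(h, L)`-discretization `Z̃ = R(Z) + E[Z - R(Z)]` of a random variable `Z`
with distribution `μ`. -/
def discretize (h L : ℝ) (μ : MeasureTheory.Measure ℝ) : MeasureTheory.Measure ℝ :=
  μ.map fun t => discRound h L t + discMean h L μ

/-- The wrapping map `w_L : ℝ → (-L, L]` with `w_L(x) ≡ x (mod 2L)`. -/
def wrap (L x : ℝ) : ℝ := x - 2 * L * ((⌈x / (2 * L) - 1 / 2⌉ : ℤ) : ℝ)

/-- `Z^{⊕_L k}`: the `k`-fold convolution wrapped into `(-L, L]`. -/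
def wconvPow (μ : MeasureTheory.Measure ℝ) (L : ℝ) (k : ℕ) : MeasureTheory.Measure ℝ :=
  (convPow μ k).map (wrap L)

/-- `Y` conditioned on `|Y| ≤ L`. -/
def condAbs (μ : MeasureTheory.Measure ℝ) (L : ℝ) : MeasureTheory.Measure ℝ :=
  ProbabilityTheory.cond μ {x : ℝ | |x| ≤ L}

end

lemma hoeff_core {p : ℝ} (hp0 : 0 ≤ p) (hp1 : p ≤ 1) (u : ℝ) :
    (1 - p) * exp (-(p * u)) + p * exp ((1 - p) * u) ≤ exp (u ^ 2 / 8) := by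
  have h8 : (0:ℝ) ≤ u ^ 2 / 8 := by positivity
  rcases eq_or_lt_of_le hp0 with h0 | h0
  · simp only [← h0]; simpa using one_le_exp h8
  rcases eq_or_lt_of_le hp1 with h1 | h1
  · simp only [h1]; simpa using one_le_exp h8
  have hden : ∀ x : ℝ, 0 < 1 - p + p * exp x := fun x => by nlinarith [exp_pos x]
  set φ : ℝ → ℝ := fun x => p * exp x / (1 - p + p * exp x) with hφdef
  have hdenat : ∀ x : ℝ, HasDerivAt (fun u => 1 - p + p * exp u) (p * exp x) x := fun x =>
    ((Real.hasDerivAt_exp x).const_mul p).const_add _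
  have hdφ : ∀ x, HasDerivAt φ (p * exp x * (1 - p) / (1 - p + p * exp x) ^ 2) x := by
    intro x
    have h1 : HasDerivAt (fun u => p * exp u) (p * exp x) x := (Real.hasDerivAt_exp x).const_mul p
    have := h1.div (hdenat x) (ne_of_gt (hden x))
    have hne := (hden x).ne'
    exact this.congr_deriv (by ring)
  have hφ_lip : ∀ x y : ℝ, |φ y - φ x| ≤ 1 / 4 * |y - x| := by
    intro x y
    have hb : ∀ z : ℝ, z ∈ Set.univ → ‖deriv φ z‖ ≤ 1 / 4 := by
      intro z _
      rw [(hdφ z).deriv, Real.norm_eq_abs, abs_of_nonneg (div_nonneg (mul_nonneg (mul_nonneg h0.le (exp_pos z).le) (by linarith)) (by positivity))]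
      rw [div_le_iff₀ (pow_pos (hden z) 2)]
      nlinarith [sq_nonneg (1 - p - p * exp z), exp_pos z]
    have := Convex.norm_image_sub_le_of_norm_deriv_le
      (fun z _ => (hdφ z).differentiableAt) hb convex_univ (Set.mem_univ x) (Set.mem_univ y)
    simpa [Real.norm_eq_abs] using this
  have hφ0 : φ 0 = p := by simp [hφdef]
  set g : ℝ → ℝ := fun u => log (1 - p + p * exp u) - p * u - u ^ 2 / 8 with hgdef
  have hg' : ∀ x, HasDerivAt g (φ x - (p + 2 * x / 8)) x := by
    intro x
    have hlog : HasDerivAt (fun u => log (1 - p + p * exp u)) (φ x) x :=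
      (hdenat x).log (ne_of_gt (hden x))
    have hlin : HasDerivAt (fun u : ℝ => p * u) p x := by
      simpa using (hasDerivAt_id x).const_mul p
    have hsq : HasDerivAt (fun u : ℝ => u ^ 2 / 8) (2 * x ^ 1 / 8) x :=
      (hasDerivAt_pow 2 x).div_const 8
    have h2 := (hlog.sub hlin).sub hsq
    rw [show φ x - (p + 2 * x / 8) = φ x - p - 2 * x ^ 1 / 8 by ring]
    exact h2
  have hgderiv : ∀ x, deriv g x = φ x - p - x / 4 := by
    intro x
    rw [(hg' x).deriv]; ring
  have hg0 : g 0 = 0 := by simp [hgdef]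
  have hgle : ∀ x, g x ≤ 0 := by
    intro x
    rcases le_total 0 x with hx | hx
    · have hanti : AntitoneOn g (Set.Ici 0) := by
        apply antitoneOn_of_deriv_nonpos (convex_Ici 0)
        · exact fun z _ => ((hg' z).differentiableAt).continuousAt.continuousWithinAt
        · exact fun z _ => ((hg' z).differentiableAt).differentiableWithinAt
        · intro z hz
          rw [interior_Ici] at hz
          rw [hgderiv]
          have := hφ_lip 0 z
          rw [hφ0] at this
          have habs : φ z - p ≤ 1 / 4 * |z - 0| := (abs_le.mp this).2
          rw [sub_zero, abs_of_pos hz] at habs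
          linarith
      have := hanti (Set.self_mem_Ici) hx hx
      rwa [hg0] at this
    · have hmono : MonotoneOn g (Set.Iic 0) := by
        apply monotoneOn_of_deriv_nonneg (convex_Iic 0)
        · exact fun z _ => ((hg' z).differentiableAt).continuousAt.continuousWithinAt
        · exact fun z _ => ((hg' z).differentiableAt).differentiableWithinAt
        · intro z hz
          rw [interior_Iic] at hz
          rw [hgderiv]
          have := hφ_lip 0 z
          rw [hφ0] at this
          have habs : -(1 / 4 * |z - 0|) ≤ φ z - p := neg_le_of_abs_le this
          rw [sub_zero, abs_of_neg hz] at habs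
          linarith
      have := hmono hx (Set.self_mem_Iic) hx
      rwa [hg0] at this
  have key : (1 - p) * exp (-(p * u)) + p * exp ((1 - p) * u)
      = exp (-(p * u)) * (1 - p + p * exp u) := by
    rw [show (1 - p) * u = -(p * u) + u by ring, Real.exp_add]
    ring
  rw [key]
  have : exp (-(p * u)) * (1 - p + p * exp u) = exp (-(p * u) + log (1 - p + p * exp u)) := by
    rw [Real.exp_add, Real.exp_log (hden u)]
  rw [this]
  apply Real.exp_le_exp.mpr
  have := hgle u
  simp only [hgdef] at this
  linarith

lemma abs_le_max_of_mem_Icc {a b x : ℝ} (hx : x ∈ Set.Icc a b) : |x| ≤ max |a| |b| := by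
  rcases hx with ⟨h1, h2⟩
  rw [abs_le]
  constructor
  · have : -|a| ≤ a := neg_abs_le a
    exact le_trans (by linarith [le_max_left |a| |b|]) h1
  · exact le_trans h2 (le_trans (le_abs_self b) (le_max_right _ _))

lemma integrable_of_ae_Icc {ν : Measure ℝ} [IsFiniteMeasure ν] {a b : ℝ} {f : ℝ → ℝ}
    (hf : AEStronglyMeasurable f ν) (hsupp : ∀ᵐ x ∂ν, x ∈ Set.Icc a b)
    (C : ℝ) (hC : ∀ x ∈ Set.Icc a b, |f x| ≤ C) : Integrable f ν := by
  refine Integrable.mono' (integrable_const C) hf ?_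
  exact hsupp.mono fun x hx => by rw [Real.norm_eq_abs]; exact hC x hx

lemma hoeffding_meas (ν : Measure ℝ) [IsProbabilityMeasure ν] {a b : ℝ}
    (hsupp : ∀ᵐ x ∂ν, x ∈ Set.Icc a b) (hmean : ∫ x, x ∂ν = 0) (l : ℝ) :
    ∫ x, exp (l * x) ∂ν ≤ exp (l ^ 2 * (b - a) ^ 2 / 8) := by
  have h8 : (0:ℝ) ≤ l ^ 2 * (b - a) ^ 2 / 8 := by positivity
  have hab : a ≤ b := by
    by_contra hab
    rw [Set.Icc_eq_empty hab] at hsupp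
    have := ae_iff.mp hsupp
    simp only [Set.mem_empty_iff_false, not_false_iff, Set.setOf_true, measure_univ] at this
    exact one_ne_zero this
  have hxint : Integrable (fun x : ℝ => x) ν :=
    integrable_of_ae_Icc aestronglyMeasurable_id hsupp (max |a| |b|)
      fun x hx => abs_le_max_of_mem_Icc hx
  have ha0 : a ≤ 0 := by
    have : ∫ x, a ∂ν ≤ ∫ x, x ∂ν :=
      integral_mono_ae (integrable_const a) hxint (hsupp.mono fun x hx => hx.1)
    rw [hmean, integral_const, probReal_univ] at this
    simpa using this
  have hb0 : 0 ≤ b := by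
    have : ∫ x, x ∂ν ≤ ∫ x, b ∂ν :=
      integral_mono_ae hxint (integrable_const b) (hsupp.mono fun x hx => hx.2)
    rw [hmean, integral_const, probReal_univ] at this
    simpa using this
  rcases eq_or_lt_of_le hab with heq | hlt
  · have ha : a = 0 := le_antisymm ha0 (heq ▸ hb0)
    have hb : b = 0 := heq ▸ ha
    subst ha; subst hb
    have : ∀ᵐ x ∂ν, exp (l * x) = 1 := hsupp.mono fun x hx => by
      have : x = 0 := le_antisymm hx.2 hx.1
      simp [this]
    rw [integral_congr_ae this]
    simpa using one_le_exp h8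
  have hba : b - a ≠ 0 := ne_of_gt (by linarith)
  have hexp_meas : AEStronglyMeasurable (fun x => exp (l * x)) ν :=
    (Real.continuous_exp.comp (continuous_const.mul continuous_id)).aestronglyMeasurable
  have hexp_int : Integrable (fun x => exp (l * x)) ν := by
    refine integrable_of_ae_Icc hexp_meas hsupp (exp (|l| * max |a| |b|)) fun x hx => ?_
    rw [abs_of_pos (exp_pos _), Real.exp_le_exp]
    calc l * x ≤ |l * x| := le_abs_self _
    _ = |l| * |x| := abs_mul l x
    _ ≤ |l| * max |a| |b| := by
        exact mul_le_mul_of_nonneg_left (abs_le_max_of_mem_Icc hx) (abs_nonneg l)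
  set C : ℝ := (b * exp (l * a) - a * exp (l * b)) / (b - a) with hC
  set D : ℝ := (exp (l * b) - exp (l * a)) / (b - a) with hD
  have hptw : ∀ᵐ x ∂ν, exp (l * x) ≤ C + D * x := by
    refine hsupp.mono fun x hx => ?_
    set θ : ℝ := (b - x) / (b - a) with hθ
    have hθ0 : 0 ≤ θ := div_nonneg (by linarith [hx.2]) (by linarith)
    have hθ1 : 0 ≤ 1 - θ := by
      rw [hθ]
      rw [sub_nonneg, div_le_one (by linarith)]
      linarith [hx.1]
    have hsum : θ + (1 - θ) = 1 := by ring
    have hconv := convexOn_exp.2 (Set.mem_univ (l * a)) (Set.mem_univ (l * b)) hθ0 hθ1 hsum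
    rw [smul_eq_mul, smul_eq_mul, smul_eq_mul, smul_eq_mul] at hconv
    have harg : θ * (l * a) + (1 - θ) * (l * b) = l * x := by
      rw [hθ]; field_simp; ring
    rw [harg] at hconv
    refine le_trans hconv ?_
    apply le_of_eq
    rw [hC, hD, hθ]
    field_simp
    ring
  have haff_int : Integrable (fun x => C + D * x) ν :=
    (integrable_const C).add (hxint.const_mul D)
  have hint_le : ∫ x, exp (l * x) ∂ν ≤ C := by
    calc ∫ x, exp (l * x) ∂ν ≤ ∫ x, C + D * x ∂ν := integral_mono_ae hexp_int haff_int hptw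
    _ = C + D * ∫ x, x ∂ν := by
        rw [integral_add (integrable_const C) (hxint.const_mul D), integral_const, probReal_univ,
          integral_const_mul]
        simp
    _ = C := by rw [hmean]; ring
  refine le_trans hint_le ?_
  set p : ℝ := -a / (b - a) with hp
  have hp0 : 0 ≤ p := div_nonneg (by linarith) (by linarith)
  have hp1 : p ≤ 1 := by
    rw [hp, div_le_one (by linarith)]
    linarith
  have hcore := hoeff_core hp0 hp1 (l * (b - a))
  have e1 : -(p * (l * (b - a))) = l * a := by rw [hp]; field_simp
  have e2 : (1 - p) * (l * (b - a)) = l * b := by rw [hp]; field_simp; ring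
  have e3 : (l * (b - a)) ^ 2 / 8 = l ^ 2 * (b - a) ^ 2 / 8 := by ring
  rw [e1, e2, e3] at hcore
  refine le_trans (le_of_eq ?_) hcore
  rw [hp, hC]
  field_simp
  ring

section MPow
variable {G : Type*} [MeasurableSpace G] [AddMonoid G] [MeasurableAdd₂ G]
variable {H : Type*} [MeasurableSpace H] [AddMonoid H] [MeasurableAdd₂ H]

noncomputable def mSum (μ ν : Measure G) : Measure G := (μ.prod ν).map fun p => p.1 + p.2

noncomputable def mPow (μ : Measure G) : ℕ → Measure G
  | 0 => Measure.dirac 0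
  | n + 1 => mSum (mPow μ n) μ

instance mSum_prob (μ ν : Measure G) [IsProbabilityMeasure μ] [IsProbabilityMeasure ν] :
    IsProbabilityMeasure (mSum μ ν) :=
  Measure.isProbabilityMeasure_map measurable_add.aemeasurable

instance mPow_prob (μ : Measure G) [IsProbabilityMeasure μ] (k : ℕ) :
    IsProbabilityMeasure (mPow μ k) := by
  induction k with
  | zero => exact ⟨by simp [mPow]⟩
  | succ n ih => exact mSum_prob _ _

lemma mPow_map (μ : Measure G) [IsProbabilityMeasure μ] (φ : G → H) (hm : Measurable φ)
    (h0 : φ 0 = 0) (hadd : ∀ x y, φ (x + y) = φ x + φ y) (k : ℕ) :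
    (mPow μ k).map φ = mPow (μ.map φ) k := by
  haveI : IsProbabilityMeasure (μ.map φ) := Measure.isProbabilityMeasure_map hm.aemeasurable
  induction k with
  | zero => simp [mPow, Measure.map_dirac' hm, h0]
  | succ n ih =>
    haveI := mPow_prob μ n
    haveI := mPow_prob (μ.map φ) n
    show (mSum (mPow μ n) μ).map φ = mSum (mPow (μ.map φ) n) (μ.map φ)
    rw [mSum, Measure.map_map hm measurable_add]
    have : (φ ∘ fun p : G × G => p.1 + p.2)
        = (fun p : H × H => p.1 + p.2) ∘ Prod.map φ φ := by
      funext p; exact hadd p.1 p.2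
    rw [this, ← Measure.map_map measurable_add (hm.prodMap hm),
      ← Measure.map_prod_map _ _ hm hm, ih]
    rfl

end MPow

lemma convPow_eq_mPow (μ : Measure ℝ) (k : ℕ) : convPow μ k = mPow μ k := by
  induction k with
  | zero => rfl
  | succ n ih => show mconv (convPow μ n) μ = mSum (mPow μ n) μ; rw [ih]; rfl

lemma mPow_lintegral_exp (μ : Measure ℝ) [IsProbabilityMeasure μ] (l : ℝ) (k : ℕ) :
    ∫⁻ x, ENNReal.ofReal (exp (l * x)) ∂(mPow μ k)
      = (∫⁻ x, ENNReal.ofReal (exp (l * x)) ∂μ) ^ k := by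
  have hm : Measurable fun x : ℝ => ENNReal.ofReal (exp (l * x)) :=
    (Real.continuous_exp.comp (continuous_const.mul continuous_id)).measurable.ennreal_ofReal
  induction k with
  | zero => simp [mPow, lintegral_dirac' _ hm]
  | succ n ih =>
    haveI := mPow_prob μ n
    show ∫⁻ x, ENNReal.ofReal (exp (l * x)) ∂(mSum (mPow μ n) μ) = _
    rw [mSum, lintegral_map hm measurable_add]
    have : ∀ p : ℝ × ℝ, ENNReal.ofReal (exp (l * (p.1 + p.2)))
        = ENNReal.ofReal (exp (l * p.1)) * ENNReal.ofReal (exp (l * p.2)) := by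
      intro p
      rw [← ENNReal.ofReal_mul (exp_pos _).le, ← Real.exp_add]
      ring_nf
    simp_rw [this]
    rw [lintegral_prod_mul hm.aemeasurable hm.aemeasurable, ih, pow_succ]

lemma chernoff_upper (ν : Measure ℝ) [IsProbabilityMeasure ν] {a b : ℝ}
    (hsupp : ∀ᵐ x ∂ν, x ∈ Set.Icc a b) (hmean : ∫ x, x ∂ν = 0)
    (k : ℕ) {t l : ℝ} (hl : 0 ≤ l) :
    (mPow ν k) {x : ℝ | t < x} ≤ ENNReal.ofReal (exp (k * (l ^ 2 * (b - a) ^ 2 / 8) - l * t)) := by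
  have hm : Measurable fun x : ℝ => ENNReal.ofReal (exp (l * x)) :=
    (Real.continuous_exp.comp (continuous_const.mul continuous_id)).measurable.ennreal_ofReal
  have hS : MeasurableSet {x : ℝ | t < x} := measurableSet_Ioi
  haveI := mPow_prob ν k
  have step1 : (mPow ν k) {x : ℝ | t < x}
      ≤ ∫⁻ x, ENNReal.ofReal (exp (-(l * t))) * ENNReal.ofReal (exp (l * x)) ∂(mPow ν k) := by
    rw [← lintegral_indicator_one hS]
    refine lintegral_mono fun x => ?_
    rw [← ENNReal.ofReal_mul (exp_pos _).le, ← Real.exp_add]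
    by_cases hx : x ∈ {x : ℝ | t < x}
    · rw [Set.indicator_of_mem hx]
      refine ENNReal.one_le_ofReal.mpr (one_le_exp ?_)
      have : t < x := hx
      nlinarith
    · rw [Set.indicator_of_notMem hx]
      positivity
  refine le_trans step1 ?_
  rw [lintegral_const_mul _ hm, mPow_lintegral_exp]
  have hfac : ∫⁻ x, ENNReal.ofReal (exp (l * x)) ∂ν ≤ ENNReal.ofReal (exp (l ^ 2 * (b - a) ^ 2 / 8)) := by
    have hexp_int : Integrable (fun x => exp (l * x)) ν := by
      refine integrable_of_ae_Icc
        (Real.continuous_exp.comp (continuous_const.mul continuous_id)).aestronglyMeasurable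
        hsupp (exp (|l| * max |a| |b|)) fun x hx => ?_
      rw [abs_of_pos (exp_pos _), Real.exp_le_exp]
      calc l * x ≤ |l * x| := le_abs_self _
      _ = |l| * |x| := abs_mul l x
      _ ≤ |l| * max |a| |b| :=
          mul_le_mul_of_nonneg_left (abs_le_max_of_mem_Icc hx) (abs_nonneg l)
    rw [← ofReal_integral_eq_lintegral_ofReal hexp_int
      (Filter.Eventually.of_forall fun x => (exp_pos _).le)]
    exact ENNReal.ofReal_le_ofReal (hoeffding_meas ν hsupp hmean l)
  calc ENNReal.ofReal (exp (-(l * t))) * (∫⁻ x, ENNReal.ofReal (exp (l * x)) ∂ν) ^ k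
      ≤ ENNReal.ofReal (exp (-(l * t))) * ENNReal.ofReal (exp (l ^ 2 * (b - a) ^ 2 / 8)) ^ k := by
        exact mul_le_mul_right (pow_le_pow_left' hfac k) _
    _ = ENNReal.ofReal (exp (k * (l ^ 2 * (b - a) ^ 2 / 8) - l * t)) := by
        rw [← ENNReal.ofReal_pow (exp_pos _).le, ← ENNReal.ofReal_mul (exp_pos _).le,
          ← Real.exp_nat_mul, ← Real.exp_add]
        congr 1
        ring

lemma chernoff_two_sided (ν : Measure ℝ) [IsProbabilityMeasure ν] {a b : ℝ}
    (hsupp : ∀ᵐ x ∂ν, x ∈ Set.Icc a b) (hmean : ∫ x, x ∂ν = 0)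
    {k : ℕ} (hk : 0 < k) {t : ℝ} (ht : 0 ≤ t) (hab : a < b) :
    (mPow ν k) {x : ℝ | t < |x|} ≤
      ENNReal.ofReal (2 * exp (-2 * t ^ 2 / (k * (b - a) ^ 2))) := by
  haveI := mPow_prob ν k
  set l : ℝ := 4 * t / (k * (b - a) ^ 2) with hl
  have hba : (0:ℝ) < b - a := by linarith
  have hkpos : (0:ℝ) < k := Nat.cast_pos.mpr hk
  have hl0 : 0 ≤ l := by positivity
  have hexpo : k * (l ^ 2 * (b - a) ^ 2 / 8) - l * t = -2 * t ^ 2 / (k * (b - a) ^ 2) := by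
    rw [hl]
    field_simp
    ring
  -- the negated measure
  have hnm : Measurable fun x : ℝ => -x := measurable_neg
  have hνneg : IsProbabilityMeasure (ν.map (fun x : ℝ => -x)) :=
    Measure.isProbabilityMeasure_map hnm.aemeasurable
  have hsupp' : ∀ᵐ x ∂(ν.map (fun x : ℝ => -x)), x ∈ Set.Icc (-b) (-a) := by
    refine (ae_map_iff hnm.aemeasurable measurableSet_Icc).mpr ?_
    exact hsupp.mono fun x hx => ⟨by linarith [hx.2], by linarith [hx.1]⟩
  have hmean' : ∫ x, x ∂(ν.map (fun x : ℝ => -x)) = 0 := by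
    rw [show (∫ x, x ∂(Measure.map (fun x : ℝ => -x) ν)) = ∫ x, -x ∂ν from
      integral_map hnm.aemeasurable aestronglyMeasurable_id, integral_neg, hmean, neg_zero]
  have hmapPow : (mPow ν k).map (fun x : ℝ => -x) = mPow (ν.map (fun x : ℝ => -x)) k :=
    mPow_map ν _ hnm neg_zero (fun x y => neg_add x y) k
  have hlow : (mPow ν k) {x : ℝ | t < -x}
      ≤ ENNReal.ofReal (exp (k * (l ^ 2 * ((-a) - (-b)) ^ 2 / 8) - l * t)) := by
    have := chernoff_upper (ν.map (fun x : ℝ => -x)) hsupp' hmean' k (t := t) hl0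
    rw [← hmapPow, show {x : ℝ | t < x} = Set.Ioi t from rfl,
      Measure.map_apply hnm measurableSet_Ioi] at this
    exact this
  have hsub : {x : ℝ | t < |x|} ⊆ {x : ℝ | t < x} ∪ {x : ℝ | t < -x} := by
    intro x hx
    rcases abs_cases x with ⟨he, _⟩ | ⟨he, _⟩
    · left; rw [Set.mem_setOf_eq, ← he]; exact hx
    · right; rw [Set.mem_setOf_eq, ← he]; exact hx
  have hup := chernoff_upper ν hsupp hmean k (t := t) hl0
  calc (mPow ν k) {x : ℝ | t < |x|}
      ≤ (mPow ν k) ({x : ℝ | t < x} ∪ {x : ℝ | t < -x}) := measure_mono hsub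
    _ ≤ (mPow ν k) {x : ℝ | t < x} + (mPow ν k) {x : ℝ | t < -x} := measure_union_le _ _
    _ ≤ ENNReal.ofReal (exp (k * (l ^ 2 * (b - a) ^ 2 / 8) - l * t))
        + ENNReal.ofReal (exp (k * (l ^ 2 * ((-a) - (-b)) ^ 2 / 8) - l * t)) :=
          add_le_add hup hlow
    _ = ENNReal.ofReal (2 * exp (-2 * t ^ 2 / (k * (b - a) ^ 2))) := by
        have : ((-a) - (-b)) ^ 2 = (b - a) ^ 2 := by ring
        rw [this, hexpo, ← ENNReal.ofReal_add (exp_pos _).le (exp_pos _).le]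
        congr 1
        ring

lemma discRound_measurable (h L : ℝ) : Measurable (discRound h L) := by
  unfold discRound
  refine Measurable.const_mul ?_ h
  exact measurable_from_top.comp
    (Measurable.max measurable_const ((measurable_id.div_const h).sub_const (1/2)).ceil)

lemma discRound_close {h : ℝ} (hh : 0 < h) {n : ℕ} {L : ℝ} (hL : L = h * ((n : ℝ) + 1 / 2))
    {t : ℝ} (ht : t ∈ Set.Icc (-L) L) : |discRound h L t - t| ≤ h / 2 := by
  have hh0 : h ≠ 0 := ne_of_gt hh
  have hLh : L / h - 1 / 2 = (n : ℝ) := by rw [hL]; field_simp; ring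
  have hfl : ⌊L / h - 1 / 2⌋ = (n : ℤ) := by rw [hLh]; exact_mod_cast Int.floor_natCast n
  set c : ℤ := ⌈t / h - 1 / 2⌉ with hc
  have hcl : t / h - 1 / 2 ≤ (c : ℝ) := Int.le_ceil _
  have hcu : (c : ℝ) ≤ t / h + 1 / 2 := by
    have := Int.ceil_lt_add_one (t / h - 1 / 2)
    linarith
  have hnl : ((-(n : ℤ) : ℤ) : ℝ) ≤ t / h + 1 / 2 := by
    have h1 : -L ≤ t := ht.1
    rw [hL] at h1
    have h2 : -((n : ℝ) + 1 / 2) ≤ t / h := by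
      rw [le_div_iff₀ hh]
      linarith
    push_cast
    linarith
  have hmm : discRound h L t = h * ((max (-(n : ℤ)) c : ℤ) : ℝ) := by
    unfold discRound
    rw [hfl]
  have hmaxl : t / h - 1 / 2 ≤ ((max (-(n : ℤ)) c : ℤ) : ℝ) := by
    refine le_trans hcl ?_
    exact_mod_cast Int.cast_le.mpr (le_max_right _ _)
  have hmaxu : ((max (-(n : ℤ)) c : ℤ) : ℝ) ≤ t / h + 1 / 2 := by
    rw [Int.cast_max]
    exact max_le hnl hcu
  rw [hmm, abs_le]
  have htdiv : h * (t / h) = t := by field_simp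
  constructor
  · nlinarith [mul_le_mul_of_nonneg_left hmaxu hh.le]
  · nlinarith [mul_le_mul_of_nonneg_left hmaxl hh.le]


/-- Tail of the `k`-fold convolution of a discretized random variable, in terms of
the tail of the `k`-fold convolution of the original variable. -/
theorem discretize_convPow_tail
    (h : ℝ) (hh : 0 < h) (n : ℕ) (hn : 0 < n) (L : ℝ) (hL : L = h * ((n : ℝ) + 1 / 2))
    (Z : MeasureTheory.Measure ℝ) [MeasureTheory.IsProbabilityMeasure Z]
    (hsupp : Z (Set.Icc (-L) L)ᶜ = 0)
    (hint : MeasureTheory.Integrable (fun x : ℝ => x) Z)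
    (k : ℕ) (hk : 0 < k) (η : ℝ) (hη : η ∈ Set.Ioo (0 : ℝ) 1) (s : ℝ) :
    ((convPow (discretize h L Z) k) {x : ℝ | s < |x|}).toReal ≤
      η + ((convPow Z k) {x : ℝ | s - h * Real.sqrt (k / 2 * Real.log (2 / η)) < |x|}).toReal := by
  classical
  have hae : ∀ᵐ t ∂Z, t ∈ Set.Icc (-L) L := by
    rw [ae_iff]
    exact hsupp
  have hL0 : 0 < L := by rw [hL]; positivity
  set m : ℝ := discMean h L Z with hm
  set g : ℝ → ℝ := fun t => discRound h L t + m with hgdef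
  have hRm : Measurable (discRound h L) := discRound_measurable h L
  have hgm : Measurable g := hRm.add_const m
  have hRint : Integrable (discRound h L) Z := by
    refine integrable_of_ae_Icc hRm.aestronglyMeasurable hae (L + h / 2) fun t ht => ?_
    have h1 := discRound_close hh hL ht
    have h2 : |t| ≤ L := abs_le.mpr ⟨ht.1, ht.2⟩
    calc |discRound h L t| = |(discRound h L t - t) + t| := by ring_nf
      _ ≤ |discRound h L t - t| + |t| := abs_add_le _ _
      _ ≤ L + h / 2 := by linarith
  set γ : Measure (ℝ × ℝ) := Z.map (fun t => (g t, t)) with hγ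
  have hpairm : Measurable fun t : ℝ => (g t, t) := hgm.prodMk measurable_id
  haveI : IsProbabilityMeasure γ := Measure.isProbabilityMeasure_map hpairm.aemeasurable
  have hfst : γ.map Prod.fst = discretize h L Z := by
    rw [hγ, Measure.map_map measurable_fst hpairm]; rfl
  have hsnd : γ.map Prod.snd = Z := by
    rw [hγ, Measure.map_map measurable_snd hpairm]; exact Measure.map_id
  have hsubm : Measurable fun p : ℝ × ℝ => p.1 - p.2 := measurable_fst.sub measurable_snd
  set ν : Measure ℝ := γ.map (fun p : ℝ × ℝ => p.1 - p.2) with hν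
  have hdm : Measurable fun t : ℝ => g t - t := hgm.sub measurable_id
  have hνeq : ν = Z.map (fun t => g t - t) := by
    rw [hν, hγ, Measure.map_map hsubm hpairm]; rfl
  haveI : IsProbabilityMeasure ν := by
    rw [hνeq]; exact Measure.isProbabilityMeasure_map hdm.aemeasurable
  have hνsupp : ∀ᵐ x ∂ν, x ∈ Set.Icc (m - h / 2) (m + h / 2) := by
    rw [hνeq]
    refine (ae_map_iff hdm.aemeasurable measurableSet_Icc).mpr ?_
    refine hae.mono fun t ht => ?_
    have h1 := abs_le.mp (discRound_close hh hL ht)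
    constructor
    · show m - h / 2 ≤ discRound h L t + m - t
      linarith [h1.1]
    · show discRound h L t + m - t ≤ m + h / 2
      linarith [h1.2]
  have hνmean : ∫ x, x ∂ν = 0 := by
    rw [hνeq, show (∫ x, x ∂(Z.map fun t => g t - t)) = ∫ t, (g t - t) ∂Z from
      integral_map hdm.aemeasurable aestronglyMeasurable_id]
    have e1 : ∫ t, (discRound h L t + m) ∂Z = (∫ t, discRound h L t ∂Z) + m := by
      rw [integral_add hRint (integrable_const m), integral_const, probReal_univ]
      simp
    have e0 : ∫ t, (g t - t) ∂Z = (∫ t, (discRound h L t + m) ∂Z) - ∫ t, t ∂Z :=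
      integral_sub (hRint.add (integrable_const m)) hint
    rw [e0, e1, hm, discMean]
    ring
  set tt : ℝ := h * Real.sqrt ((k : ℝ) / 2 * Real.log (2 / η)) with htt
  have hη2 : (1:ℝ) ≤ 2 / η := by
    rw [le_div_iff₀ hη.1]
    linarith [hη.2]
  have hlognn : 0 ≤ (k : ℝ) / 2 * Real.log (2 / η) :=
    mul_nonneg (by positivity) (log_nonneg hη2)
  have htt0 : 0 ≤ tt := by positivity
  have hkne : ((k : ℝ)) ≠ 0 := ne_of_gt (Nat.cast_pos.mpr hk)
  haveI := mPow_prob γ k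
  haveI := mPow_prob Z k
  haveI := mPow_prob ν k
  have hνtail : (mPow ν k) {x : ℝ | tt < |x|} ≤ ENNReal.ofReal η := by
    have hc := chernoff_two_sided ν hνsupp hνmean hk htt0 (show m - h / 2 < m + h / 2 by linarith)
    refine le_trans hc (le_of_eq ?_)
    congr 1
    have hdiff : (m + h / 2) - (m - h / 2) = h := by ring
    rw [hdiff]
    have hsq : tt ^ 2 = h ^ 2 * ((k : ℝ) / 2 * Real.log (2 / η)) := by
      rw [htt, mul_pow, Real.sq_sqrt hlognn]
    have hexpo : -2 * tt ^ 2 / ((k : ℝ) * h ^ 2) = -Real.log (2 / η) := by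
      rw [hsq]; field_simp
    rw [hexpo, Real.exp_neg, Real.exp_log (by positivity : (0:ℝ) < 2 / η)]
    field_simp
  rw [convPow_eq_mPow, convPow_eq_mPow]
  have hmap_fst : (mPow γ k).map Prod.fst = mPow (discretize h L Z) k := by
    rw [mPow_map γ Prod.fst measurable_fst rfl (fun _ _ => rfl), hfst]
  have hmap_snd : (mPow γ k).map Prod.snd = mPow Z k := by
    rw [mPow_map γ Prod.snd measurable_snd rfl (fun _ _ => rfl), hsnd]
  have hmap_sub : (mPow γ k).map (fun p : ℝ × ℝ => p.1 - p.2) = mPow ν k := by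
    rw [mPow_map γ _ hsubm (by simp) (fun x y => by
      show (x + y).1 - (x + y).2 = (x.1 - x.2) + (y.1 - y.2)
      simp [Prod.fst_add, Prod.snd_add]
      ring), hν]
  have hA : MeasurableSet {x : ℝ | s < |x|} :=
    measurableSet_lt measurable_const continuous_abs.measurable
  have hA1 : MeasurableSet {x : ℝ | tt < |x|} :=
    measurableSet_lt measurable_const continuous_abs.measurable
  have hA2 : MeasurableSet {x : ℝ | s - tt < |x|} :=
    measurableSet_lt measurable_const continuous_abs.measurable
  have hsub2 : (Prod.fst ⁻¹' {x : ℝ | s < |x|} : Set (ℝ × ℝ))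
      ⊆ {p : ℝ × ℝ | tt < |p.1 - p.2|} ∪ {p : ℝ × ℝ | s - tt < |p.2|} := by
    intro p hp
    by_cases hb : tt < |p.1 - p.2|
    · exact Or.inl hb
    · right
      push_neg at hb
      have h3 : |p.1| - |p.2| ≤ |p.1 - p.2| := abs_sub_abs_le_abs_sub p.1 p.2
      have hp' : s < |p.1| := hp
      show s - tt < |p.2|
      linarith
  have hB1 : (mPow γ k) {p : ℝ × ℝ | tt < |p.1 - p.2|} = (mPow ν k) {x : ℝ | tt < |x|} := by
    rw [← hmap_sub, Measure.map_apply hsubm hA1]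
    rfl
  have hB2 : (mPow γ k) {p : ℝ × ℝ | s - tt < |p.2|} = (mPow Z k) {x : ℝ | s - tt < |x|} := by
    rw [← hmap_snd, Measure.map_apply measurable_snd hA2]
    rfl
  have main : (mPow (discretize h L Z) k) {x : ℝ | s < |x|}
      ≤ ENNReal.ofReal η + (mPow Z k) {x : ℝ | s - tt < |x|} := by
    rw [← hmap_fst, Measure.map_apply measurable_fst hA]
    calc (mPow γ k) (Prod.fst ⁻¹' {x : ℝ | s < |x|})
        ≤ (mPow γ k) ({p : ℝ × ℝ | tt < |p.1 - p.2|} ∪ {p : ℝ × ℝ | s - tt < |p.2|}) :=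
          measure_mono hsub2
      _ ≤ (mPow γ k) {p : ℝ × ℝ | tt < |p.1 - p.2|}
          + (mPow γ k) {p : ℝ × ℝ | s - tt < |p.2|} := measure_union_le _ _
      _ ≤ ENNReal.ofReal η + (mPow Z k) {x : ℝ | s - tt < |x|} := by
          rw [hB1, hB2]
          exact add_le_add hνtail le_rfl
  have hfin : (mPow Z k) {x : ℝ | s - tt < |x|} ≠ ⊤ := measure_ne_top _ _
  calc ((mPow (discretize h L Z) k) {x : ℝ | s < |x|}).toReal
      ≤ (ENNReal.ofReal η + (mPow Z k) {x : ℝ | s - tt < |x|}).toReal := by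
        refine ENNReal.toReal_mono ?_ main
        exact ENNReal.add_ne_top.mpr ⟨ENNReal.ofReal_ne_top, hfin⟩
    _ = η + ((mPow Z k) {x : ℝ | s - tt < |x|}).toReal := by
        rw [ENNReal.toReal_add ENNReal.ofReal_ne_top hfin, ENNReal.toReal_ofReal hη.1.le]
end

section
/- Let X and Y be real-valued random variables with |X − Y| ≤_{δ_err} ε_err for some ε_err ≥ 0 and δ_err ∈ [0, 1]. Then for every ε ∈ ℝ, δ_Y(ε + ε_err) − δ_err ≤ δ_X(ε) ≤ δ_Y(ε − ε_err) + δ_err. -/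
open MeasureTheory ProbabilityTheory Real

section Aux

open MeasureTheory

private lemma deltaFun_cont (ε : ℝ) :
    Continuous fun x : ℝ => max 0 (1 - Real.exp (ε - x)) := by
  fun_prop

private lemma deltaFun_nonneg (ε x : ℝ) : 0 ≤ max 0 (1 - Real.exp (ε - x)) :=
  le_max_left _ _

private lemma deltaFun_le_one (ε x : ℝ) : max 0 (1 - Real.exp (ε - x)) ≤ 1 := by
  apply max_le (by norm_num)
  have := (Real.exp_pos (ε - x)).le
  linarith

private lemma key_lemma (γ : Measure (ℝ × ℝ)) [IsProbabilityMeasure γ]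
    (μ ν : Measure ℝ) (hμ : γ.map Prod.fst = μ) (hν : γ.map Prod.snd = ν)
    (εerr δerr ε : ℝ) (hεerr : 0 ≤ εerr)
    (hb : (γ {p : ℝ × ℝ | εerr < |p.1 - p.2|}).toReal ≤ δerr) :
    deltaCurve μ ε ≤ deltaCurve ν (ε - εerr) + δerr := by
  have hBad : MeasurableSet {p : ℝ × ℝ | εerr < |p.1 - p.2|} := by
    apply measurableSet_lt measurable_const
    exact (measurable_fst.sub measurable_snd).abs
  set B := {p : ℝ × ℝ | εerr < |p.1 - p.2|} with hBdef
  -- rewrite both deltaCurves as integrals over γ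
  have h1 : deltaCurve μ ε = ∫ p : ℝ × ℝ, max 0 (1 - Real.exp (ε - p.1)) ∂γ := by
    rw [deltaCurve, ← hμ,
      integral_map measurable_fst.aemeasurable
        ((deltaFun_cont ε).aestronglyMeasurable)]
  have h2 : deltaCurve ν (ε - εerr)
      = ∫ p : ℝ × ℝ, max 0 (1 - Real.exp (ε - εerr - p.2)) ∂γ := by
    rw [deltaCurve, ← hν,
      integral_map measurable_snd.aemeasurable
        ((deltaFun_cont (ε - εerr)).aestronglyMeasurable)]
  have hint1 : Integrable (fun p : ℝ × ℝ => max 0 (1 - Real.exp (ε - p.1))) γ := by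
    refine (integrable_const (1 : ℝ)).mono'
      ((deltaFun_cont ε).comp continuous_fst).aestronglyMeasurable ?_
    filter_upwards with p
    rw [Real.norm_eq_abs, abs_of_nonneg (deltaFun_nonneg _ _)]
    exact deltaFun_le_one _ _
  have hint2 : Integrable (fun p : ℝ × ℝ => max 0 (1 - Real.exp (ε - εerr - p.2))) γ := by
    refine (integrable_const (1 : ℝ)).mono'
      ((deltaFun_cont (ε - εerr)).comp continuous_snd).aestronglyMeasurable ?_
    filter_upwards with p
    rw [Real.norm_eq_abs, abs_of_nonneg (deltaFun_nonneg _ _)]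
    exact deltaFun_le_one _ _
  have hint3 : Integrable (B.indicator fun _ : ℝ × ℝ => (1 : ℝ)) γ :=
    (integrable_const (1 : ℝ)).indicator hBad
  have hpt : ∀ p : ℝ × ℝ, max 0 (1 - Real.exp (ε - p.1))
      ≤ max 0 (1 - Real.exp (ε - εerr - p.2)) + B.indicator (fun _ => (1 : ℝ)) p := by
    intro p
    by_cases hp : p ∈ B
    · rw [Set.indicator_of_mem hp]
      have := deltaFun_nonneg (ε - εerr) p.2
      have := deltaFun_le_one ε p.1
      linarith
    · rw [Set.indicator_of_notMem hp]
      simp only [hBdef, Set.mem_setOf_eq, not_lt] at hp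
      have h2' : p.2 - p.1 ≥ -εerr := by
        have := abs_le.mp hp
        linarith [this.1]
      have hle : ε - εerr - p.2 ≤ ε - p.1 := by linarith
      have := Real.exp_le_exp.mpr hle
      simp only [add_zero]
      exact max_le_max le_rfl (by linarith)
  have hmono : ∫ p : ℝ × ℝ, max 0 (1 - Real.exp (ε - p.1)) ∂γ
      ≤ ∫ p : ℝ × ℝ, (max 0 (1 - Real.exp (ε - εerr - p.2))
          + B.indicator (fun _ => (1 : ℝ)) p) ∂γ :=
    integral_mono hint1 (hint2.add hint3) hpt
  rw [integral_add hint2 hint3] at hmono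
  have hind : ∫ p : ℝ × ℝ, B.indicator (fun _ => (1 : ℝ)) p ∂γ = (γ B).toReal := by
    rw [integral_indicator hBad, integral_const]
    simp [Measure.restrict_apply_univ]
    rfl
  rw [hind] at hmono
  rw [h1, h2]
  linarith

end Aux

/-- A coupling approximation between `X` and `Y` transfers the privacy curve of `Y`
to that of `X`, up to the error parameters. -/
theorem delta_from_coupling
    (X Y : MeasureTheory.Measure ℝ)
    [MeasureTheory.IsProbabilityMeasure X] [MeasureTheory.IsProbabilityMeasure Y]
    (εerr δerr : ℝ) (hεerr : 0 ≤ εerr) (hδerr : δerr ∈ Set.Icc (0 : ℝ) 1)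
    (hc : CouplingApprox X Y δerr εerr) (ε : ℝ) :
    deltaCurve Y (ε + εerr) - δerr ≤ deltaCurve X ε ∧
      deltaCurve X ε ≤ deltaCurve Y (ε - εerr) + δerr := by
  obtain ⟨γ, hγprob, hfst, hsnd, hbad⟩ := hc
  constructor
  · -- swap the coupling
    have hswap : Measurable (Prod.swap : ℝ × ℝ → ℝ × ℝ) := measurable_swap
    set γ' := γ.map Prod.swap with hγ'def
    haveI : IsProbabilityMeasure γ' := Measure.isProbabilityMeasure_map hswap.aemeasurable
    have hfst' : γ'.map Prod.fst = Y := by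
      rw [hγ'def, Measure.map_map measurable_fst hswap]
      exact hsnd
    have hsnd' : γ'.map Prod.snd = X := by
      rw [hγ'def, Measure.map_map measurable_snd hswap]
      exact hfst
    have hBad : MeasurableSet {p : ℝ × ℝ | εerr < |p.1 - p.2|} := by
      apply measurableSet_lt measurable_const
      exact (measurable_fst.sub measurable_snd).abs
    have hbad' : (γ' {p : ℝ × ℝ | εerr < |p.1 - p.2|}).toReal ≤ δerr := by
      rw [hγ'def, Measure.map_apply hswap hBad]
      have : (Prod.swap ⁻¹' {p : ℝ × ℝ | εerr < |p.1 - p.2|})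
          = {p : ℝ × ℝ | εerr < |p.1 - p.2|} := by
        ext p
        simp [abs_sub_comm]
      rw [this]
      exact hbad
    have := key_lemma γ' Y X hfst' hsnd' εerr δerr (ε + εerr) hεerr hbad'
    have hε : ε + εerr - εerr = ε := by ring
    rw [hε] at this
    linarith
  · exact key_lemma γ X Y hfst hsnd εerr δerr ε hεerr hbad
end

section
/- Let X and Y be integrable real-valued random variables with E[X] = E[Y], and suppose there exist μ ∈ ℝ and h ≥ 0 and a coupling of X and Y under which |X − Y − μ| ≤ h almost surely (i.e., |X − Y − μ| ≤_0 h). Then for every η ∈ (0, 2) and every k ∈ ℤ_{>0}, |X^{⊕k} − Y^{⊕k}| ≤_η h·√(2·k·log(2/η)). -/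
open MeasureTheory ProbabilityTheory Real

lemma key_ineq {p : ℝ} (hp0 : 0 ≤ p) (hp1 : p ≤ 1) (u : ℝ) :
    -(p * u) + Real.log (1 - p + p * Real.exp u) ≤ u ^ 2 / 8 := by
  set A : ℝ → ℝ := fun v => 1 - p + p * Real.exp v with hAdef
  have hA : ∀ v, 0 < A v := by
    intro v
    rcases eq_or_lt_of_le hp0 with h | h
    · simp only [hAdef, ← h]; norm_num
    · have h1 := exp_pos v
      have h2 : 0 < p * Real.exp v := by positivity
      simp only [hAdef]; linarith
  set F : ℝ → ℝ := fun v => v ^ 2 / 8 + p * v - Real.log (A v) with hFdef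
  set G : ℝ → ℝ := fun v => v / 4 + p - p * Real.exp v / A v with hGdef
  have hA' : ∀ v, HasDerivAt A (p * Real.exp v) v := by
    intro v
    exact ((Real.hasDerivAt_exp v).const_mul p).const_add (1 - p)
  have hF' : ∀ v, HasDerivAt F (G v) v := by
    intro v
    have h2 : HasDerivAt (fun w => Real.log (A w)) (p * Real.exp v / A v) v :=
      (hA' v).log (hA v).ne'
    have h3 : HasDerivAt (fun w : ℝ => w ^ 2 / 8 + p * w) (v / 4 + p) v := by
      have := ((hasDerivAt_pow 2 v).div_const 8).add ((hasDerivAt_id v).const_mul p)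
      exact this.congr_deriv (by ring)
    exact h3.sub h2
  have hG' : ∀ v, HasDerivAt G (1 / 4 - p * (1 - p) * Real.exp v / (A v) ^ 2) v := by
    intro v
    have hq : HasDerivAt (fun w => p * Real.exp w / A w)
        ((p * Real.exp v * A v - p * Real.exp v * (p * Real.exp v)) / (A v) ^ 2) v :=
      (((Real.hasDerivAt_exp v).const_mul p)).div (hA' v) (hA v).ne'
    have h3 : HasDerivAt (fun w : ℝ => w / 4 + p) (1 / 4) v := by
      simpa using ((hasDerivAt_id v).div_const 4).add_const p
    have hd := h3.sub hq
    have hnum : p * Real.exp v * A v - p * Real.exp v * (p * Real.exp v)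
        = p * (1 - p) * Real.exp v := by
      have hAv : A v = 1 - p + p * Real.exp v := rfl
      rw [hAv]; ring
    rw [← hnum]
    exact hd
  have hG'nonneg : ∀ v, 0 ≤ 1 / 4 - p * (1 - p) * Real.exp v / (A v) ^ 2 := by
    intro v
    have h4 : p * (1 - p) * Real.exp v / (A v) ^ 2 ≤ 1 / 4 := by
      have hAv : A v = 1 - p + p * Real.exp v := rfl
      rw [div_le_iff₀ (pow_pos (hA v) 2), hAv]
      nlinarith [sq_nonneg ((1 - p) - p * Real.exp v), exp_pos v]
    linarith
  have hGmono : Monotone G := by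
    apply monotone_of_deriv_nonneg (fun v => (hG' v).differentiableAt)
    intro v; rw [(hG' v).deriv]; exact hG'nonneg v
  have hG0 : G 0 = 0 := by simp [hGdef, hAdef]
  have hF0 : F 0 = 0 := by simp [hFdef, hAdef]
  have hFcont : Continuous F := by
    have : Differentiable ℝ F := fun v => (hF' v).differentiableAt
    exact this.continuous
  have hge : 0 ≤ F u := by
    rcases le_total 0 u with h | h
    · have := monotoneOn_of_deriv_nonneg (convex_Ici 0) hFcont.continuousOn
        (fun v _ => (hF' v).differentiableAt.differentiableWithinAt)
        (fun v hv => by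
          rw [(hF' v).deriv]
          have : (0:ℝ) ≤ G v := by
            rw [← hG0]
            exact hGmono (le_of_lt (by simpa using hv))
          exact this)
      have := this (Set.self_mem_Ici) (by exact h) h
      rwa [hF0] at this
    · have := antitoneOn_of_deriv_nonpos (convex_Iic 0) hFcont.continuousOn
        (fun v _ => (hF' v).differentiableAt.differentiableWithinAt)
        (fun v hv => by
          rw [(hF' v).deriv]
          have : G v ≤ 0 := by
            rw [← hG0]
            exact hGmono (le_of_lt (by simpa using hv))
          exact this)
      have := this (by exact h) (Set.self_mem_Iic) h
      rwa [hF0] at this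
  have : Real.log (A u) ≤ u ^ 2 / 8 + p * u - 0 := by
    simp only [hFdef] at hge; linarith
  simp only [hAdef] at this
  linarith

lemma hoeffding_mgf (ν : Measure ℝ) [IsProbabilityMeasure ν] {c h : ℝ} (hh : 0 ≤ h)
    (hsupp : ∀ᵐ x ∂ν, |x - c| ≤ h) (hmean : (∫ x, x ∂ν) = 0) (l : ℝ) :
    ∫ x, Real.exp (l * x) ∂ν ≤ Real.exp (l ^ 2 * h ^ 2 / 2) := by
  have hab : ∀ᵐ x ∂ν, c - h ≤ x ∧ x ≤ c + h := by
    filter_upwards [hsupp] with x hx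
    rw [abs_le] at hx
    constructor <;> linarith [hx.1, hx.2]
  have hbound : ∀ᵐ x ∂ν, ‖x‖ ≤ |c| + h := by
    filter_upwards [hab] with x hx
    rw [Real.norm_eq_abs, abs_le]
    constructor <;> cases abs_cases c <;> linarith [hx.1, hx.2]
  have intId : Integrable (fun x : ℝ => x) ν :=
    (integrable_const (|c| + h)).mono' measurable_id.aestronglyMeasurable hbound
  have ha0 : c - h ≤ 0 := by
    have h1 : (∫ _ : ℝ, (c - h) ∂ν) ≤ ∫ x, x ∂ν :=
      integral_mono_ae (integrable_const _) intId (hab.mono fun x hx => hx.1)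
    rw [integral_const, probReal_univ] at h1
    simpa [hmean] using h1
  have hb0 : 0 ≤ c + h := by
    have h1 : (∫ x, x ∂ν) ≤ ∫ _ : ℝ, (c + h) ∂ν :=
      integral_mono_ae intId (integrable_const _) (hab.mono fun x hx => hx.2)
    rw [integral_const, probReal_univ] at h1
    simpa [hmean] using h1
  rcases eq_or_lt_of_le hh with h0 | h0
  · -- h = 0
    have hc : c = 0 := le_antisymm (by linarith) (by linarith)
    have : ∀ᵐ x ∂ν, Real.exp (l * x) = 1 := by
      filter_upwards [hsupp] with x hx
      have : x = 0 := by
        rw [← h0, hc] at hx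
        simpa [abs_nonpos_iff] using hx
      simp [this]
    rw [integral_congr_ae this]
    simp only [integral_const, probReal_univ, ENNReal.toReal_one, smul_eq_mul, mul_one]
    exact Real.one_le_exp (by positivity)
  · -- 0 < h
    set a := c - h with hadef
    set b := c + h with hbdef
    have hba : b - a = 2 * h := by rw [hadef, hbdef]; ring
    have hba0 : 0 < b - a := by rw [hba]; linarith
    set p : ℝ := -a / (b - a) with hpdef
    have hp0 : 0 ≤ p := div_nonneg (by linarith) hba0.le
    have hp1 : p ≤ 1 := by
      rw [hpdef, div_le_one hba0]; linarith
    set r : ℝ := (Real.exp (l * b) - Real.exp (l * a)) / (b - a) with hrdef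
    set s : ℝ := (b * Real.exp (l * a) - a * Real.exp (l * b)) / (b - a) with hsdef
    have hpt : ∀ᵐ x ∂ν, Real.exp (l * x) ≤ x * r + s := by
      filter_upwards [hab] with x hx
      have hθ0 : 0 ≤ (b - x) / (b - a) := div_nonneg (by linarith [hx.2]) hba0.le
      have hθ1 : 0 ≤ (x - a) / (b - a) := div_nonneg (by linarith [hx.1]) hba0.le
      have hsum : (b - x) / (b - a) + (x - a) / (b - a) = 1 := by
        field_simp
        ring
      have hcvx := convexOn_exp.2 (Set.mem_univ (l * a)) (Set.mem_univ (l * b))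
        hθ0 hθ1 hsum
      simp only [smul_eq_mul] at hcvx
      have heq : (b - x) / (b - a) * (l * a) + (x - a) / (b - a) * (l * b) = l * x := by
        field_simp
        ring
      rw [heq] at hcvx
      refine hcvx.trans_eq ?_
      rw [hrdef, hsdef]
      field_simp
      ring
    have intL : Integrable (fun x : ℝ => Real.exp (l * x)) ν := by
      refine (integrable_const (Real.exp (|l| * (|c| + h)))).mono'
        (Continuous.aestronglyMeasurable (by continuity)) ?_
      filter_upwards [hbound] with x hx
      rw [Real.norm_eq_abs, abs_of_pos (exp_pos _), Real.exp_le_exp]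
      calc l * x ≤ |l * x| := le_abs_self _
        _ = |l| * |x| := abs_mul l x
        _ ≤ |l| * (|c| + h) := by
            apply mul_le_mul_of_nonneg_left _ (abs_nonneg l)
            rwa [Real.norm_eq_abs] at hx
    have intR : Integrable (fun x : ℝ => x * r + s) ν :=
      (intId.mul_const r).add (integrable_const s)
    have hInt : (∫ x, Real.exp (l * x) ∂ν) ≤ ∫ x, x * r + s ∂ν :=
      integral_mono_ae intL intR hpt
    have hRval : (∫ x, x * r + s ∂ν) = s := by
      rw [integral_add (intId.mul_const r) (integrable_const s),
        integral_mul_const, hmean, integral_const, probReal_univ]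
      simp
    rw [hRval] at hInt
    refine hInt.trans ?_
    -- now show s ≤ exp (l^2 h^2 / 2)
    set u : ℝ := l * (b - a) with hudef
    have hApos : 0 < 1 - p + p * Real.exp u := by
      rcases eq_or_lt_of_le hp0 with hq | hq
      · rw [← hq]; norm_num
      · have := exp_pos u
        nlinarith
    have hkey := key_ineq hp0 hp1 u
    have hla : -(p * u) = l * a := by
      rw [hpdef, hudef]
      field_simp
    have hs_eq : s = Real.exp (-(p * u) + Real.log (1 - p + p * Real.exp u)) := by
      have hexp : Real.exp (l * a) * Real.exp (l * (b - a)) = Real.exp (l * b) := by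
        rw [← Real.exp_add]; congr 1; ring
      rw [Real.exp_add, Real.exp_log hApos, hla, hsdef, hpdef, hudef, ← hexp]
      field_simp
      ring
    have hu8 : u ^ 2 / 8 = l ^ 2 * h ^ 2 / 2 := by
      rw [hudef, hba]; ring
    rw [hs_eq]
    rw [Real.exp_le_exp]
    rw [← hu8]
    exact hkey

lemma measurable_add2 : Measurable (fun p : ℝ × ℝ => p.1 + p.2) := by fun_prop

instance mconv_prob (μ ν : Measure ℝ) [IsProbabilityMeasure μ] [IsProbabilityMeasure ν] :
    IsProbabilityMeasure (mconv μ ν) :=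
  Measure.isProbabilityMeasure_map measurable_add2.aemeasurable

instance convPow_prob (μ : Measure ℝ) [IsProbabilityMeasure μ] (k : ℕ) :
    IsProbabilityMeasure (convPow μ k) := by
  induction k with
  | zero => exact Measure.dirac.isProbabilityMeasure
  | succ n ih => exact mconv_prob _ _

lemma integral_exp_mconv (μ ν : Measure ℝ) [IsProbabilityMeasure μ] [IsProbabilityMeasure ν]
    (l : ℝ) :
    ∫ x, Real.exp (l * x) ∂(mconv μ ν) =
      (∫ x, Real.exp (l * x) ∂μ) * ∫ x, Real.exp (l * x) ∂ν := by
  rw [mconv, integral_map measurable_add2.aemeasurable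
      (Continuous.aestronglyMeasurable (by continuity))]
  have : ∀ p : ℝ × ℝ, Real.exp (l * (p.1 + p.2)) =
      Real.exp (l * p.1) * Real.exp (l * p.2) := by
    intro p; rw [← Real.exp_add]; congr 1; ring
  simp_rw [this]
  exact integral_prod_mul (fun x => Real.exp (l * x)) (fun x => Real.exp (l * x))

lemma integral_exp_convPow (ν : Measure ℝ) [IsProbabilityMeasure ν] (l : ℝ) (k : ℕ) :
    ∫ x, Real.exp (l * x) ∂(convPow ν k) = (∫ x, Real.exp (l * x) ∂ν) ^ k := by
  induction k with
  | zero => simp [convPow, integral_dirac]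
  | succ n ih =>
    rw [convPow, integral_exp_mconv, ih, pow_succ]

lemma convPow_ae_bound (ν : Measure ℝ) [IsProbabilityMeasure ν] {c h : ℝ}
    (hsupp : ∀ᵐ x ∂ν, |x - c| ≤ h) (k : ℕ) :
    ∀ᵐ x ∂(convPow ν k), |x - k * c| ≤ k * h := by
  induction k with
  | zero =>
    rw [convPow]
    rw [ae_dirac_iff (by
      exact measurableSet_le ((continuous_abs.comp (continuous_sub_right _)).measurable)
        measurable_const)]
    simp
  | succ n ih =>
    rw [convPow, mconv]
    rw [ae_map_iff measurable_add2.aemeasurable (by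
      exact measurableSet_le ((continuous_abs.comp (continuous_sub_right _)).measurable)
        measurable_const)]
    have h1 : ∀ᵐ p : ℝ × ℝ ∂(convPow ν n).prod ν, |p.1 - n * c| ≤ n * h :=
      ae_of_ae_map (p := fun y : ℝ => |y - n * c| ≤ n * h)
        (measurable_fst.aemeasurable) (by rw [Measure.map_fst_prod]; simpa using ih)
    have h2 : ∀ᵐ p : ℝ × ℝ ∂(convPow ν n).prod ν, |p.2 - c| ≤ h :=
      ae_of_ae_map (p := fun y : ℝ => |y - c| ≤ h)
        (measurable_snd.aemeasurable) (by rw [Measure.map_snd_prod]; simpa using hsupp)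
    filter_upwards [h1, h2] with p hp1 hp2
    have : p.1 + p.2 - (↑(n + 1) : ℝ) * c = (p.1 - n * c) + (p.2 - c) := by
      push_cast; ring
    rw [this]
    calc |(p.1 - n * c) + (p.2 - c)| ≤ |p.1 - n * c| + |p.2 - c| := abs_add_le _ _
      _ ≤ n * h + h := add_le_add hp1 hp2
      _ = (↑(n + 1) : ℝ) * h := by push_cast; ring

lemma integrable_exp_of_bound (S : Measure ℝ) [IsFiniteMeasure S] (l M : ℝ)
    (hb : ∀ᵐ x ∂S, |x| ≤ M) : Integrable (fun x => Real.exp (l * x)) S := by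
  refine (integrable_const (Real.exp (|l| * M))).mono'
    (Continuous.aestronglyMeasurable (by continuity)) ?_
  filter_upwards [hb] with x hx
  rw [Real.norm_eq_abs, abs_of_pos (exp_pos _), Real.exp_le_exp]
  calc l * x ≤ |l * x| := le_abs_self _
    _ = |l| * |x| := abs_mul l x
    _ ≤ |l| * M := mul_le_mul_of_nonneg_left hx (abs_nonneg l)

lemma tail_bound (ν : Measure ℝ) [IsProbabilityMeasure ν] {c h η : ℝ} (hh : 0 ≤ h)
    (hsupp : ∀ᵐ x ∂ν, |x - c| ≤ h) (hmean : (∫ x, x ∂ν) = 0)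
    (hη0 : 0 < η) (hη2 : η < 2) (k : ℕ) (hk : 0 < k) :
    ((convPow ν k) {x : ℝ | h * Real.sqrt (2 * k * Real.log (2 / η)) < |x|}).toReal ≤ η := by
  have hL : 0 < Real.log (2 / η) := Real.log_pos (by rw [lt_div_iff₀ hη0]; linarith)
  set t0 : ℝ := h * Real.sqrt (2 * k * Real.log (2 / η)) with ht0def
  rcases eq_or_lt_of_le hh with h0 | h0
  · -- h = 0
    have hc : ∀ᵐ x ∂ν, x = c := by
      filter_upwards [hsupp] with x hx
      rw [← h0] at hx
      exact sub_eq_zero.mp (abs_nonpos_iff.mp hx)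
    have hc0 : c = 0 := by
      have h1 : (∫ x, x ∂ν) = ∫ _ : ℝ, c ∂ν := integral_congr_ae hc
      rw [hmean, integral_const, probReal_univ] at h1
      simpa using h1.symm
    have hae := convPow_ae_bound ν hsupp k
    rw [ae_iff] at hae
    have hset : {x : ℝ | t0 < |x|} = {x : ℝ | ¬ |x - k * c| ≤ k * h} := by
      ext x
      simp [ht0def, ← h0, hc0, not_le]
    rw [hset, hae]
    simp
    linarith
  · -- 0 < h
    have hkR : (0:ℝ) < k := by exact_mod_cast hk
    have hs0 : 0 < Real.sqrt (2 * k * Real.log (2 / η)) :=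
      Real.sqrt_pos.mpr (by positivity)
    have ht0 : 0 < t0 := by positivity
    set l : ℝ := t0 / (k * h ^ 2) with hldef
    have hl : 0 < l := by positivity
    set S := convPow ν k with hSdef
    have hbd : ∀ᵐ x ∂S, |x| ≤ k * |c| + k * h := by
      filter_upwards [convPow_ae_bound ν hsupp k] with x hx
      calc |x| = |(x - k * c) + k * c| := by ring_nf
        _ ≤ |x - k * c| + |(k:ℝ) * c| := abs_add_le _ _
        _ ≤ k * h + k * |c| := by
            refine add_le_add hx ?_
            rw [abs_mul, Nat.abs_cast]
        _ = k * |c| + k * h := by ring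
    have hmgf : ∀ m : ℝ, mgf (fun x => x) S m ≤ Real.exp (k * (m ^ 2 * h ^ 2 / 2)) := by
      intro m
      have h1 : mgf (fun x => x) S m = (∫ x, Real.exp (m * x) ∂ν) ^ k := by
        rw [mgf]
        exact integral_exp_convPow ν m k
      rw [h1]
      have h2 := hoeffding_mgf ν hh hsupp hmean m
      have h3 : (0:ℝ) ≤ ∫ x, Real.exp (m * x) ∂ν :=
        integral_nonneg fun x => (exp_pos _).le
      calc (∫ x, Real.exp (m * x) ∂ν) ^ k ≤ (Real.exp (m ^ 2 * h ^ 2 / 2)) ^ k :=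
            pow_le_pow_left₀ h3 h2 k
        _ = Real.exp (k * (m ^ 2 * h ^ 2 / 2)) := by rw [← Real.exp_nat_mul]
    have hexpval : Real.exp (-l * t0 + k * (l ^ 2 * h ^ 2 / 2)) = η / 2 := by
      have ht0sq : t0 ^ 2 = h ^ 2 * (2 * k * Real.log (2 / η)) := by
        rw [ht0def, mul_pow, Real.sq_sqrt (by positivity)]
      have harg : -l * t0 + k * (l ^ 2 * h ^ 2 / 2) = -Real.log (2 / η) := by
        rw [hldef]
        field_simp
        linear_combination (-1 : ℝ) * ht0sq
      rw [harg, Real.exp_neg, Real.exp_log (by positivity), inv_div]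
    have intSl : Integrable (fun x => Real.exp (l * x)) S :=
      integrable_exp_of_bound S l _ hbd
    have intSnl : Integrable (fun x => Real.exp (-l * x)) S :=
      integrable_exp_of_bound S (-l) _ hbd
    have hup : (S {x : ℝ | t0 ≤ x}).toReal ≤ η / 2 := by
      have := measure_ge_le_exp_mul_mgf (μ := S) (X := fun x => x) t0 hl.le intSl
      refine this.trans ?_
      calc Real.exp (-l * t0) * mgf (fun x => x) S l
          ≤ Real.exp (-l * t0) * Real.exp (k * (l ^ 2 * h ^ 2 / 2)) :=
            mul_le_mul_of_nonneg_left (hmgf l) (exp_pos _).le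
        _ = Real.exp (-l * t0 + k * (l ^ 2 * h ^ 2 / 2)) := (Real.exp_add _ _).symm
        _ = η / 2 := hexpval
    have hdown : (S {x : ℝ | x ≤ -t0}).toReal ≤ η / 2 := by
      have := measure_le_le_exp_mul_mgf (μ := S) (X := fun x => x) (-t0)
        (neg_nonpos.mpr hl.le) intSnl
      refine this.trans ?_
      calc Real.exp (-(-l) * -t0) * mgf (fun x => x) S (-l)
          ≤ Real.exp (-l * t0) * Real.exp (k * ((-l) ^ 2 * h ^ 2 / 2)) := by
            rw [show -(-l) * -t0 = -l * t0 by ring]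
            exact mul_le_mul_of_nonneg_left (hmgf (-l)) (exp_pos _).le
        _ = Real.exp (-l * t0 + k * (l ^ 2 * h ^ 2 / 2)) := by
            rw [← Real.exp_add]; ring_nf
        _ = η / 2 := hexpval
    have hsub : {x : ℝ | t0 < |x|} ⊆ {x : ℝ | t0 ≤ x} ∪ {x : ℝ | x ≤ -t0} := by
      intro x hx
      simp only [Set.mem_setOf_eq] at hx
      simp only [Set.mem_setOf_eq, Set.mem_union]
      rcases le_total 0 x with hx0 | hx0
      · left; rw [abs_of_nonneg hx0] at hx; linarith
      · right; rw [abs_of_nonpos hx0] at hx; linarith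
    calc ((convPow ν k) {x : ℝ | t0 < |x|}).toReal
        ≤ ((S {x : ℝ | t0 ≤ x}) + S {x : ℝ | x ≤ -t0}).toReal := by
          apply ENNReal.toReal_mono
          · exact ENNReal.add_ne_top.mpr ⟨measure_ne_top _ _, measure_ne_top _ _⟩
          · exact (measure_mono hsub).trans (measure_union_le _ _)
      _ = (S {x : ℝ | t0 ≤ x}).toReal + (S {x : ℝ | x ≤ -t0}).toReal :=
          ENNReal.toReal_add (measure_ne_top _ _) (measure_ne_top _ _)
      _ ≤ η / 2 + η / 2 := add_le_add hup hdown
      _ = η := by ring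

/-- pairwise sum map -/
def pairSum : (ℝ × ℝ) × (ℝ × ℝ) → ℝ × ℝ := fun q => (q.1.1 + q.2.1, q.1.2 + q.2.2)

lemma measurable_pairSum : Measurable pairSum := by
  unfold pairSum; fun_prop

/-- iterated self-coupling -/
noncomputable def cpow (γ : Measure (ℝ × ℝ)) : ℕ → Measure (ℝ × ℝ)
  | 0 => Measure.dirac (0, 0)
  | n + 1 => ((cpow γ n).prod γ).map pairSum

lemma cpow_prob (γ : Measure (ℝ × ℝ)) [IsProbabilityMeasure γ] (k : ℕ) :
    IsProbabilityMeasure (cpow γ k) := by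
  induction k with
  | zero => exact Measure.dirac.isProbabilityMeasure
  | succ n ih =>
    haveI := ih
    exact Measure.isProbabilityMeasure_map measurable_pairSum.aemeasurable

lemma cpow_map (γ : Measure (ℝ × ℝ)) [IsProbabilityMeasure γ] (k : ℕ)
    (f : ℝ × ℝ → ℝ) (hf : Measurable f)
    (hadd : ∀ p q : ℝ × ℝ, f (pairSum (p, q)) = f p + f q) (hf0 : f (0, 0) = 0) :
    (cpow γ k).map f = convPow (γ.map f) k := by
  induction k with
  | zero =>
    show (Measure.dirac ((0:ℝ), (0:ℝ))).map f = Measure.dirac 0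
    rw [Measure.map_dirac' hf, hf0]
  | succ n ih =>
    haveI := cpow_prob γ n
    show (((cpow γ n).prod γ).map pairSum).map f = mconv (convPow (γ.map f) n) (γ.map f)
    rw [Measure.map_map hf measurable_pairSum]
    have hcomp : f ∘ pairSum = (fun p : ℝ × ℝ => p.1 + p.2) ∘ Prod.map f f := by
      funext q
      exact hadd q.1 q.2
    rw [hcomp, ← Measure.map_map (by fun_prop) (hf.prodMap hf),
      ← Measure.map_prod_map _ _ hf hf, ih, mconv]

/-- Hoeffding-style concentration for coupling approximations of convolution powers. -/
theorem coupling_concentration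
    (X Y : MeasureTheory.Measure ℝ)
    [MeasureTheory.IsProbabilityMeasure X] [MeasureTheory.IsProbabilityMeasure Y]
    (hX : MeasureTheory.Integrable (fun x : ℝ => x) X)
    (hY : MeasureTheory.Integrable (fun x : ℝ => x) Y)
    (hmean : (∫ x, x ∂X) = ∫ x, x ∂Y)
    (μ h : ℝ) (hh : 0 ≤ h)
    (hc : ∃ γ : MeasureTheory.Measure (ℝ × ℝ), MeasureTheory.IsProbabilityMeasure γ ∧
      γ.map Prod.fst = X ∧ γ.map Prod.snd = Y ∧
      (γ {p : ℝ × ℝ | h < |p.1 - p.2 - μ|}).toReal ≤ 0)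
    (η : ℝ) (hη : η ∈ Set.Ioo (0 : ℝ) 2) (k : ℕ) (hk : 0 < k) :
    CouplingApprox (convPow X k) (convPow Y k) η
      (h * Real.sqrt (2 * k * Real.log (2 / η))) := by
  obtain ⟨γ, hγprob, hfst, hsnd, hbad⟩ := hc
  haveI := hγprob
  set D : ℝ × ℝ → ℝ := fun p => p.1 - p.2 with hDdef
  have hD : Measurable D := by fun_prop
  set ν : Measure ℝ := γ.map D with hνdef
  haveI : IsProbabilityMeasure ν := Measure.isProbabilityMeasure_map hD.aemeasurable
  -- bad set has measure zero
  have hbad0 : γ {p : ℝ × ℝ | h < |p.1 - p.2 - μ|} = 0 := by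
    have h1 : (γ {p : ℝ × ℝ | h < |p.1 - p.2 - μ|}).toReal = 0 :=
      le_antisymm hbad ENNReal.toReal_nonneg
    rcases (ENNReal.toReal_eq_zero_iff _).mp h1 with h2 | h2
    · exact h2
    · exact absurd h2 (measure_ne_top _ _)
  have hmset : MeasurableSet {x : ℝ | ¬ |x - μ| ≤ h} :=
    (measurableSet_le ((continuous_abs.comp (continuous_sub_right _)).measurable)
      measurable_const).compl
  have hν_supp : ∀ᵐ x ∂ν, |x - μ| ≤ h := by
    rw [ae_iff, hνdef, Measure.map_apply hD hmset]
    have : D ⁻¹' {x : ℝ | ¬ |x - μ| ≤ h} = {p : ℝ × ℝ | h < |p.1 - p.2 - μ|} := by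
      ext p
      simp [hDdef, not_le]
    rw [this, hbad0]
  -- mean zero
  have hint1 : Integrable (fun p : ℝ × ℝ => p.1) γ := by
    rw [← hfst] at hX
    exact (integrable_map_measure aestronglyMeasurable_id measurable_fst.aemeasurable).mp hX
  have hint2 : Integrable (fun p : ℝ × ℝ => p.2) γ := by
    rw [← hsnd] at hY
    exact (integrable_map_measure aestronglyMeasurable_id measurable_snd.aemeasurable).mp hY
  have hν_mean : (∫ x, x ∂ν) = 0 := by
    have hi : (∫ x, x ∂(γ.map D)) = ∫ p, D p ∂γ :=
      integral_map hD.aemeasurable aestronglyMeasurable_id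
    have hsub : (∫ p, D p ∂γ) = (∫ p : ℝ × ℝ, p.1 ∂γ) - ∫ p : ℝ × ℝ, p.2 ∂γ :=
      integral_sub hint1 hint2
    have e1 : (∫ x, x ∂X) = ∫ p : ℝ × ℝ, p.1 ∂γ := by
      rw [← hfst]
      exact integral_map measurable_fst.aemeasurable aestronglyMeasurable_id
    have e2 : (∫ x, x ∂Y) = ∫ p : ℝ × ℝ, p.2 ∂γ := by
      rw [← hsnd]
      exact integral_map measurable_snd.aemeasurable aestronglyMeasurable_id
    rw [hνdef, hi, hsub, ← e1, ← e2, hmean, sub_self]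
  -- the coupling
  refine ⟨cpow γ k, cpow_prob γ k, ?_, ?_, ?_⟩
  · rw [cpow_map γ k Prod.fst measurable_fst (fun p q => rfl) rfl, hfst]
  · rw [cpow_map γ k Prod.snd measurable_snd (fun p q => rfl) rfl, hsnd]
  · set t0 : ℝ := h * Real.sqrt (2 * k * Real.log (2 / η)) with ht0def
    have hDsum : ∀ p q : ℝ × ℝ, D (pairSum (p, q)) = D p + D q := by
      intro p q
      simp [hDdef, pairSum]
      ring
    have hmap := cpow_map γ k D hD hDsum (by simp [hDdef])
    have hset : MeasurableSet {x : ℝ | t0 < |x|} :=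
      measurableSet_lt measurable_const continuous_abs.measurable
    have heq : (cpow γ k) {p : ℝ × ℝ | t0 < |p.1 - p.2|}
        = (convPow ν k) {x : ℝ | t0 < |x|} := by
      rw [hνdef, ← hmap, Measure.map_apply hD hset]
      rfl
    rw [heq]
    exact tail_bound ν hh hν_supp hν_mean hη.1 hη.2 k hk
end
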